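/- arXiv:1503.05649 — 4 statements merged into one kernel-verified Lean document; each statement's English description precedes it below -/
import Mathlib

section
/- For every C ≥ 0 and every m > 0 there exists ε > 0 with the following property: for every function u : V → ℝ such that u(v) > 0 for every vertex v, such that u(v₀) ≥ m for at least one vertex v₀, and such that for every edge {i,j} of G one has ((η(u(i)) + η(u(j)))/2) · (p(u(i)) − p(u(j)))² ≤ C, it holds that u(v) ≥ ε for every vertex v of G. -/
open Filter Set

/-- Discrete Harnack-type uniform positivity bound propagated along the
connectivity graph (Lemma 3.7 of Cancès–Guichard). -/
theorem graph_uniform_positivity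
    {V : Type*} [Fintype V] [Nonempty V] (G : SimpleGraph V) (hG : G.Connected)
    (p : ℝ → ℝ) (hp_cont : ContinuousOn p (Set.Ioi 0))
    (hp_mono : StrictMonoOn p (Set.Ioi 0))
    (hp_bot : Tendsto p (nhdsWithin 0 (Set.Ioi 0)) atBot)
    (η : ℝ → ℝ) (hη_cont : Continuous η) (hη0 : η 0 = 0)
    (hη_pos : ∀ u : ℝ, 0 < u → 0 < η u)
    (hη_mono : MonotoneOn η (Set.Ici 0)) :
    ∀ C : ℝ, 0 ≤ C → ∀ m : ℝ, 0 < m → ∃ ε : ℝ, 0 < ε ∧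
      ∀ u : V → ℝ, (∀ v, 0 < u v) → (∃ v₀, m ≤ u v₀) →
        (∀ i j, G.Adj i j →
          ((η (u i) + η (u j)) / 2) * (p (u i) - p (u j)) ^ 2 ≤ C) →
        ∀ v, ε ≤ u v := by
  classical
  intro C hC m hm
  -- single-edge step lemma
  have step : ∀ m' : ℝ, 0 < m' → ∃ ε : ℝ, 0 < ε ∧ ε ≤ m' ∧
      ∀ a b : ℝ, m' ≤ a → 0 < b →
        ((η a + η b) / 2) * (p a - p b) ^ 2 ≤ C → ε ≤ b := by
    intro m' hm'
    set K := Real.sqrt (2 * C / η m') with hK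
    have hηm : 0 < η m' := hη_pos m' hm'
    have h1 : ∀ᶠ x in nhdsWithin (0:ℝ) (Set.Ioi 0), p x < p m' - K :=
      hp_bot.eventually (eventually_lt_atBot _)
    have h2 : ∀ᶠ x in nhdsWithin (0:ℝ) (Set.Ioi 0), x < m' :=
      eventually_nhdsWithin_of_eventually_nhds (gt_mem_nhds hm')
    have h3 : ∀ᶠ x in nhdsWithin (0:ℝ) (Set.Ioi 0), x ∈ Set.Ioi (0:ℝ) :=
      eventually_mem_nhdsWithin
    obtain ⟨ε, ⟨hpε, hεm⟩, hε0⟩ := ((h1.and h2).and h3).exists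
    refine ⟨ε, hε0, hεm.le, ?_⟩
    intro a b hma hb hbound
    by_contra hlt
    push_neg at hlt
    have ha : a ∈ Set.Ioi (0:ℝ) := lt_of_lt_of_le hm' hma
    have hpa : p m' ≤ p a := (hp_mono.monotoneOn) hm' ha hma
    have hηa : η m' ≤ η a := hη_mono hm'.le (hm'.le.trans hma) hma
    have hηb : 0 ≤ η b := (hη_pos b hb).le
    have hA : η m' / 2 * (p a - p b) ^ 2 ≤ C := by
      refine le_trans (mul_le_mul_of_nonneg_right (by linarith) (sq_nonneg _)) hbound
    have hs : (p a - p b) ^ 2 ≤ 2 * C / η m' := by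
      rw [le_div_iff₀ hηm]; nlinarith
    have habs : |p a - p b| ≤ K := Real.abs_le_sqrt hs
    have hpb : p m' - K ≤ p b := by
      have := abs_le.mp habs
      linarith
    have hpbε : p b < p ε := hp_mono hb hε0 hlt
    linarith
  choose εf hεf1 hεf2 hεf3 using step
  -- iterated constants
  let f : ℕ → {x : ℝ // 0 < x} := fun n =>
    Nat.rec ⟨m, hm⟩ (fun _ prev => ⟨εf prev.1 prev.2, hεf1 prev.1 prev.2⟩) n
  have hf_succ : ∀ n, (f (n+1)).1 = εf (f n).1 (f n).2 := fun n => rfl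
  have hf_anti : ∀ k n, n ≤ k → (f k).1 ≤ (f n).1 := by
    intro k
    induction k with
    | zero => intro n hn; simp_all
    | succ k ih =>
      intro n hn
      rcases Nat.lt_or_ge n (k+1) with h | h
      · exact le_trans (by rw [hf_succ]; exact hεf2 _ _) (ih n (Nat.lt_succ_iff.mp h))
      · have : n = k + 1 := le_antisymm hn h
        subst this; rfl
  refine ⟨(f (Fintype.card V)).1, (f _).2, ?_⟩
  rintro u hu ⟨v₀, hv₀⟩ hedge v
  have key : ∀ (a b : V) (w : G.Walk a b) (k : ℕ),
      (f k).1 ≤ u a → (f (k + w.length)).1 ≤ u b := by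
    intro a b w
    induction w with
    | nil => intro k h; simpa using h
    | @cons a c b h w ih =>
      intro k hk
      have hc : (f (k+1)).1 ≤ u c := by
        rw [hf_succ]
        exact hεf3 (f k).1 (f k).2 (u a) (u c) hk (hu c) (hedge a c h)
      have := ih (k+1) hc
      have heq : k + (SimpleGraph.Walk.cons h w).length = k + 1 + w.length := by
        simp [SimpleGraph.Walk.length_cons]; omega
      rw [heq]
      exact this
  obtain ⟨w⟩ := hG v₀ v
  have hlen : w.toPath.1.length < Fintype.card V := w.toPath.2.length_lt
  have h1 : (f (0 + w.toPath.1.length)).1 ≤ u v := key v₀ v w.toPath.1 0 hv₀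
  have h2 : (f (Fintype.card V)).1 ≤ (f (0 + w.toPath.1.length)).1 :=
    hf_anti _ _ (by omega)
  exact le_trans h2 h1
end

section
/- There exist constants C₁ and C₂, depending only on p, M and μ(Ω), such that for every measurable integrable u : Ω → ℝ with Γ∘u integrable one has (1/2)·E(u) + C₁ ≤ ∫_Ω Γ(u) dμ ≤ 2·E(u) + C₂. In particular, E is bounded from below uniformly over all such u. -/
open Filter MeasureTheory

/-- Lemma 3.4 of Cancès–Guichard: comparison between the free energy
`E(u) = ∫ (Γ(u) + u·V) dμ` and the entropy `∫ Γ(u) dμ`; in particular the free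
energy is bounded from below uniformly. -/
theorem free_energy_entropy_comparison
    {Ω : Type*} [MeasurableSpace Ω] (μ : Measure Ω) [IsFiniteMeasure μ]
    (p : ℝ → ℝ) (hp_mono : Monotone p)
    (hp_loc : LocallyIntegrable p volume)
    (hp_top : Tendsto p atTop atTop)
    (hp_bot : Tendsto p atBot atBot)
    (Γ : ℝ → ℝ) (hΓ : ∀ u : ℝ, Γ u = ∫ a in (1:ℝ)..u, (p a - p 1))
    (V : Ω → ℝ) (hV : Measurable V) (M : ℝ) (hM : ∀ᵐ x ∂μ, |V x| ≤ M) :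
    ∃ C₁ C₂ C₃ : ℝ, ∀ u : Ω → ℝ, Measurable u → Integrable u μ →
      Integrable (fun x => Γ (u x)) μ →
      (1 / 2) * (∫ x, (Γ (u x) + u x * V x) ∂μ) + C₁ ≤ ∫ x, Γ (u x) ∂μ ∧
      (∫ x, Γ (u x) ∂μ) ≤ 2 * (∫ x, (Γ (u x) + u x * V x) ∂μ) + C₂ ∧
      C₃ ≤ ∫ x, (Γ (u x) + u x * V x) ∂μ := by
  set M' := max M 0 with hM'def
  have hM'0 : (0:ℝ) ≤ M' := le_max_right _ _
  have hpint : ∀ a b : ℝ, IntervalIntegrable (fun x => p x - p 1) volume a b := by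
    intro a b
    exact (hp_mono.intervalIntegrable).sub intervalIntegrable_const
  -- Γ is nonnegative
  have hΓ0 : ∀ t : ℝ, 0 ≤ Γ t := by
    intro t
    rw [hΓ]
    rcases le_total 1 t with h | h
    · refine intervalIntegral.integral_nonneg h ?_
      intro a ha
      have := hp_mono ha.1
      linarith
    · rw [intervalIntegral.integral_symm t 1]
      have : (∫ a in t..(1:ℝ), (p a - p 1)) ≤ ∫ _a in t..(1:ℝ), (0:ℝ) :=
        intervalIntegral.integral_mono_on h (hpint t 1) intervalIntegrable_const
          (fun a ha => by have := hp_mono ha.2; linarith)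
      simp only [intervalIntegral.integral_zero] at this
      linarith
  -- growth lemma
  have growth : ∃ K : ℝ, 0 ≤ K ∧ ∀ t : ℝ, M' * |t| ≤ (1/2) * Γ t + K := by
    obtain ⟨b, hb⟩ := (hp_top.eventually_ge_atTop (p 1 + (4*M'+1))).exists
    obtain ⟨c, hc⟩ := (hp_bot.eventually_le_atBot (p 1 - (4*M'+1))).exists
    set b' := max b 1 with hb'def
    set c' := min c (-1) with hc'def
    have hb'1 : (1:ℝ) ≤ b' := le_max_right _ _
    have hc'1 : c' ≤ -1 := min_le_right _ _
    have hpb' : p 1 + (4*M'+1) ≤ p b' := le_trans hb (hp_mono (le_max_left _ _))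
    have hpc' : p c' ≤ p 1 - (4*M'+1) := le_trans (hp_mono (min_le_left _ _)) hc
    set R := 2 * max b' (-c') with hRdef
    have hRb : 2 * b' ≤ R := by
      have := le_max_left b' (-c'); linarith
    have hRc : 2 * c' ≥ -R := by
      have := le_max_right b' (-c'); linarith
    have hR0 : 0 ≤ R := by nlinarith
    refine ⟨M' * R, mul_nonneg hM'0 hR0, ?_⟩
    intro t
    rcases le_or_gt (|t|) R with h | h
    · have h1 : M' * |t| ≤ M' * R := mul_le_mul_of_nonneg_left h hM'0
      have := hΓ0 t
      linarith
    · rcases le_or_gt 0 t with ht | ht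
      · -- t ≥ 0, so t = |t| > R ≥ 2b'
        have habs : |t| = t := abs_of_nonneg ht
        have htb : 2 * b' ≤ t := by rw [habs] at h; linarith
        have hsplit : (∫ a in (1:ℝ)..b', (p a - p 1)) + (∫ a in b'..t, (p a - p 1))
            = ∫ a in (1:ℝ)..t, (p a - p 1) :=
          intervalIntegral.integral_add_adjacent_intervals (hpint 1 b') (hpint b' t)
        have h1 : 0 ≤ ∫ a in (1:ℝ)..b', (p a - p 1) := by
          refine intervalIntegral.integral_nonneg hb'1 ?_
          intro a ha
          have := hp_mono ha.1; linarith
        have h2 : (t - b') * (4*M'+1) ≤ ∫ a in b'..t, (p a - p 1) := by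
          have hle : b' ≤ t := by nlinarith
          have hc := intervalIntegral.integral_mono_on hle
            (intervalIntegrable_const (c := 4*M'+1)) (hpint b' t)
            (fun a ha => by have := hp_mono ha.1; linarith)
          rw [intervalIntegral.integral_const, smul_eq_mul] at hc
          exact hc
        have hΓt : (t - b') * (4*M'+1) ≤ Γ t := by
          rw [hΓ]; linarith
        rw [habs]
        nlinarith [mul_le_mul_of_nonneg_left htb hM'0]
      · -- t < 0, |t| = -t > R, so t < -R ≤ 2c'
        have habs : |t| = -t := abs_of_neg ht
        have htc : t ≤ 2 * c' := by rw [habs] at h; linarith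
        have hsplit : (∫ a in t..c', (p a - p 1)) + (∫ a in c'..(1:ℝ), (p a - p 1))
            = ∫ a in t..(1:ℝ), (p a - p 1) :=
          intervalIntegral.integral_add_adjacent_intervals (hpint t c') (hpint c' 1)
        have h1 : (∫ a in c'..(1:ℝ), (p a - p 1)) ≤ 0 := by
          have : (∫ a in c'..(1:ℝ), (p a - p 1)) ≤ ∫ _a in c'..(1:ℝ), (0:ℝ) :=
            intervalIntegral.integral_mono_on (by linarith) (hpint c' 1)
              intervalIntegrable_const
              (fun a ha => by have := hp_mono ha.2; linarith)
          simpa using this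
        have h2 : (∫ a in t..c', (p a - p 1)) ≤ (c' - t) * (-(4*M'+1)) := by
          have hle : t ≤ c' := by nlinarith
          have hc := intervalIntegral.integral_mono_on hle (hpint t c')
            (intervalIntegrable_const (c := -(4*M'+1)))
            (fun a ha => by have := hp_mono ha.2; linarith)
          rw [intervalIntegral.integral_const, smul_eq_mul] at hc
          exact hc
        have hΓt : (c' - t) * (4*M'+1) ≤ Γ t := by
          rw [hΓ, intervalIntegral.integral_symm t 1]
          have : (∫ a in t..(1:ℝ), (p a - p 1)) ≤ -((c' - t) * (4*M'+1)) := by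
            rw [← hsplit]; nlinarith
          linarith
        rw [habs]
        nlinarith [mul_le_mul_of_nonneg_left htc hM'0]
  obtain ⟨K, hK0, hKbd⟩ := growth
  set K₀ := K * (μ Set.univ).toReal with hK₀def
  have hK₀0 : 0 ≤ K₀ := mul_nonneg hK0 ENNReal.toReal_nonneg
  refine ⟨-K₀, 2 * K₀, -K₀, ?_⟩
  intro u hu hu_int hΓu_int
  -- integrability of u * V
  have huV : Integrable (fun x => u x * V x) μ := by
    refine Integrable.mono' ((hΓu_int.const_mul (1/2)).add (integrable_const K))
      ((hu.mul hV).aestronglyMeasurable) ?_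
    filter_upwards [hM] with x hx
    have h1 : |u x * V x| ≤ M' * |u x| := by
      rw [abs_mul]
      have : |V x| ≤ M' := le_trans hx (le_max_left _ _)
      nlinarith [abs_nonneg (u x), abs_nonneg (V x)]
    have h2 := hKbd (u x)
    simp only [Real.norm_eq_abs]
    calc |u x * V x| ≤ M' * |u x| := h1
      _ ≤ 1/2 * Γ (u x) + K := h2
  have hEsplit : (∫ x, (Γ (u x) + u x * V x) ∂μ)
      = (∫ x, Γ (u x) ∂μ) + ∫ x, u x * V x ∂μ := integral_add hΓu_int huV
  set I := ∫ x, Γ (u x) ∂μ with hIdef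
  set J := ∫ x, u x * V x ∂μ with hJdef
  have hI0 : 0 ≤ I := integral_nonneg (fun x => hΓ0 (u x))
  have hJbd : |J| ≤ (1/2) * I + K₀ := by
    have h1 : ‖J‖ ≤ ∫ x, ‖u x * V x‖ ∂μ := norm_integral_le_integral_norm _
    have h2 : (∫ x, ‖u x * V x‖ ∂μ) ≤ ∫ x, ((1/2) * Γ (u x) + K) ∂μ := by
      refine integral_mono_ae huV.norm
        ((hΓu_int.const_mul (1/2)).add (integrable_const K)) ?_
      filter_upwards [hM] with x hx
      simp only [Real.norm_eq_abs]
      have hb : |u x * V x| ≤ M' * |u x| := by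
        rw [abs_mul]
        have : |V x| ≤ M' := le_trans hx (le_max_left _ _)
        nlinarith [abs_nonneg (u x), abs_nonneg (V x)]
      exact le_trans hb (hKbd (u x))
    have h3 : (∫ x, ((1/2) * Γ (u x) + K) ∂μ) = (1/2) * I + K₀ := by
      rw [integral_add (hΓu_int.const_mul (1/2)) (integrable_const K),
        integral_const, integral_const_mul]
      simp [hIdef, hK₀def, smul_eq_mul, mul_comm, Measure.real]
    rw [Real.norm_eq_abs] at h1
    linarith
  have habs := abs_le.mp hJbd
  rw [hEsplit]
  refine ⟨by linarith [habs.2], by linarith [habs.1], by linarith [habs.1]⟩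
end

section
/- With ū_i := (1/vol(ω_i)) ∫_{ω_i} u₀ dx, one has Σ_{i=1}^{N} [ vol(ω_i)·Γ(ū_i) + V(x_i)·∫_{ω_i} u₀ dx ] ≤ ∫_Ω (Γ(u₀) + u₀·V) dx + L·h·∫_Ω u₀ dx. -/
open MeasureTheory

/-- Lemma 3.1 of Cancès–Guichard: the discrete entropy of the cell-averaged
initial data is bounded by the continuous free energy plus an `O(h)` error. -/
theorem discrete_entropy_of_initial_data
    {d : ℕ} (Γ : ℝ → ℝ) (hΓ_convex : ConvexOn ℝ Set.univ Γ)
    (Ω : Set (EuclideanSpace ℝ (Fin d))) (hΩ : MeasurableSet Ω)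
    (N : ℕ) (ω : Fin N → Set (EuclideanSpace ℝ (Fin d)))
    (hω_meas : ∀ i, MeasurableSet (ω i))
    (hω_disj : ∀ i j, i ≠ j → Disjoint (ω i) (ω j))
    (hω_cover : (⋃ i, ω i) = Ω)
    (hω_pos : ∀ i, 0 < volume (ω i)) (hω_fin : ∀ i, volume (ω i) < ⊤)
    (h : ℝ) (hh : 0 ≤ h)
    (xc : Fin N → EuclideanSpace ℝ (Fin d))
    (hnear : ∀ i, ∀ x ∈ ω i, ‖x - xc i‖ ≤ h)
    (L : NNReal) (V : EuclideanSpace ℝ (Fin d) → ℝ) (hV : LipschitzWith L V)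
    (u₀ : EuclideanSpace ℝ (Fin d) → ℝ) (hu₀_nonneg : ∀ x, 0 ≤ u₀ x)
    (hu₀_int : IntegrableOn u₀ Ω volume)
    (hΓu₀_int : IntegrableOn (fun x => Γ (u₀ x)) Ω volume) :
    ∑ i : Fin N,
        ((volume (ω i)).toReal * Γ ((volume (ω i)).toReal⁻¹ * ∫ x in ω i, u₀ x) +
          V (xc i) * ∫ x in ω i, u₀ x)
      ≤ (∫ x in Ω, (Γ (u₀ x) + u₀ x * V x)) + (L : ℝ) * h * ∫ x in Ω, u₀ x := by
  have hsub : ∀ i, ω i ⊆ Ω := fun i => hω_cover ▸ Set.subset_iUnion ω i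
  have hpair : Pairwise (Function.onFun Disjoint ω) := fun i j hij => hω_disj i j hij
  have hΓcont : ContinuousOn Γ Set.univ := hΓ_convex.continuousOn isOpen_univ
  have hu_i : ∀ i, IntegrableOn u₀ (ω i) volume := fun i => hu₀_int.mono_set (hsub i)
  have hΓ_i : ∀ i, IntegrableOn (fun x => Γ (u₀ x)) (ω i) volume :=
    fun i => hΓu₀_int.mono_set (hsub i)
  have hVbound : ∀ i, ∀ x ∈ ω i, |V x| ≤ |V (xc i)| + (L : ℝ) * h := by
    intro i x hx
    have h1 : dist (V x) (V (xc i)) ≤ (L : ℝ) * dist x (xc i) := hV.dist_le_mul x (xc i)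
    have h2 : dist x (xc i) ≤ h := by
      rw [dist_eq_norm]; exact hnear i x hx
    calc |V x| ≤ |V x - V (xc i)| + |V (xc i)| := by
            have := abs_sub_abs_le_abs_sub (V x) (V (xc i)); linarith [abs_nonneg (V x - V (xc i))]
      _ ≤ (L : ℝ) * h + |V (xc i)| := by
            rw [dist_eq_norm] at h1
            have : (L : ℝ) * dist x (xc i) ≤ (L : ℝ) * h :=
              mul_le_mul_of_nonneg_left h2 L.coe_nonneg
            simpa [Real.norm_eq_abs] using h1.trans this
      _ = |V (xc i)| + (L : ℝ) * h := by ring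
  have huV_i : ∀ i, IntegrableOn (fun x => u₀ x * V x) (ω i) volume := by
    intro i
    have hbd : ∀ᵐ x ∂(volume.restrict (ω i)), ‖V x‖ ≤ |V (xc i)| + (L : ℝ) * h := by
      refine (ae_restrict_iff' (hω_meas i)).2 (ae_of_all _ fun x hx => ?_)
      simpa [Real.norm_eq_abs] using hVbound i x hx
    have := (hu_i i).bdd_mul (hV.continuous.aestronglyMeasurable.restrict) hbd
    exact this.congr (by filter_upwards with x using mul_comm (V x) (u₀ x))
  have huV_Ω : IntegrableOn (fun x => u₀ x * V x) Ω volume := by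
    rw [← hω_cover]
    exact integrableOn_finite_iUnion.2 huV_i
  -- split the two integrals over Ω into sums over the cells
  have hsplit : ∀ (f : EuclideanSpace ℝ (Fin d) → ℝ), IntegrableOn f Ω volume →
      ∫ x in Ω, f x = ∑ i : Fin N, ∫ x in ω i, f x := by
    intro f hf
    rw [← hω_cover] at hf ⊢
    rw [integral_iUnion hω_meas hpair hf, tsum_fintype]
  -- per-cell estimates
  have key : ∀ i : Fin N,
      (volume (ω i)).toReal * Γ ((volume (ω i)).toReal⁻¹ * ∫ x in ω i, u₀ x) +
        V (xc i) * ∫ x in ω i, u₀ x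
      ≤ (∫ x in ω i, Γ (u₀ x)) + ((∫ x in ω i, u₀ x * V x) + (L : ℝ) * h * ∫ x in ω i, u₀ x) := by
    intro i
    have hvol_pos : 0 < (volume (ω i)).toReal :=
      ENNReal.toReal_pos (hω_pos i).ne' (hω_fin i).ne
    haveI : IsFiniteMeasure (volume.restrict (ω i)) :=
      ⟨by rw [Measure.restrict_apply_univ]; exact hω_fin i⟩
    haveI : NeZero (volume.restrict (ω i)) :=
      ⟨by rw [Ne, Measure.restrict_eq_zero]; exact (hω_pos i).ne'⟩
    -- Jensen
    have hjensen := hΓ_convex.map_average_le hΓcont isClosed_univ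
      (ae_of_all _ fun x => Set.mem_univ (u₀ x)) (hu_i i) (hΓ_i i)
    rw [average_eq, average_eq, measureReal_restrict_apply_univ, Measure.real, smul_eq_mul, smul_eq_mul] at hjensen
    have h1 : (volume (ω i)).toReal * Γ ((volume (ω i)).toReal⁻¹ * ∫ x in ω i, u₀ x)
        ≤ ∫ x in ω i, Γ (u₀ x) := by
      have := mul_le_mul_of_nonneg_left hjensen hvol_pos.le
      rwa [mul_inv_cancel_left₀ hvol_pos.ne'] at this
    have h2 : V (xc i) * ∫ x in ω i, u₀ x
        ≤ (∫ x in ω i, u₀ x * V x) + (L : ℝ) * h * ∫ x in ω i, u₀ x := by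
      have hmono : ∫ x in ω i, V (xc i) * u₀ x
          ≤ ∫ x in ω i, (u₀ x * V x + (L : ℝ) * h * u₀ x) := by
        refine setIntegral_mono_on ((hu_i i).const_mul _)
          ((huV_i i).add (((hu_i i).const_mul _))) (hω_meas i) ?_
        intro x hx
        have hV1 : V (xc i) - V x ≤ (L : ℝ) * h := by
          have h1 : dist (V (xc i)) (V x) ≤ (L : ℝ) * dist x (xc i) := by
            simpa [dist_comm] using hV.dist_le_mul x (xc i)
          have h2 : dist x (xc i) ≤ h := by rw [dist_eq_norm]; exact hnear i x hx
          have := (le_abs_self (V (xc i) - V x)).trans (by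
            simpa [Real.dist_eq] using h1.trans (mul_le_mul_of_nonneg_left h2 L.coe_nonneg))
          exact this
        nlinarith [hu₀_nonneg x]
      calc V (xc i) * ∫ x in ω i, u₀ x = ∫ x in ω i, V (xc i) * u₀ x := by
            rw [integral_const_mul]
        _ ≤ ∫ x in ω i, (u₀ x * V x + (L : ℝ) * h * u₀ x) := hmono
        _ = (∫ x in ω i, u₀ x * V x) + (L : ℝ) * h * ∫ x in ω i, u₀ x := by
            rw [integral_add (huV_i i) ((hu_i i).const_mul _), integral_const_mul]
    linarith
  calc ∑ i : Fin N,
        ((volume (ω i)).toReal * Γ ((volume (ω i)).toReal⁻¹ * ∫ x in ω i, u₀ x) +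
          V (xc i) * ∫ x in ω i, u₀ x)
      ≤ ∑ i : Fin N, ((∫ x in ω i, Γ (u₀ x)) +
          ((∫ x in ω i, u₀ x * V x) + (L : ℝ) * h * ∫ x in ω i, u₀ x)) :=
        Finset.sum_le_sum fun i _ => key i
    _ = (∫ x in Ω, Γ (u₀ x)) + ((∫ x in Ω, u₀ x * V x) + (L : ℝ) * h * ∫ x in Ω, u₀ x) := by
        rw [Finset.sum_add_distrib, Finset.sum_add_distrib, ← Finset.mul_sum,
          ← hsplit _ hΓu₀_int, ← hsplit _ huV_Ω, ← hsplit _ hu₀_int]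
    _ = (∫ x in Ω, (Γ (u₀ x) + u₀ x * V x)) + (L : ℝ) * h * ∫ x in Ω, u₀ x := by
        rw [integral_add hΓu₀_int huV_Ω]; ring
end

section
/- For every vector v ∈ ℝⁿ one has Σ_{i} ( Σ_{j} |A_{ij}| ) v_i² ≤ √n · (λ₊/λ₋) · (v · A v), where v · A v = Σ_{i,j} v_i A_{ij} v_j. In particular the constant C of the paper's Lemma A.2 can be taken equal to √n times the spectral condition number of A. -/
open Finset

/-- Quantitative form of Lemma A.2 of Cancès–Guichard: for a symmetric positive
definite matrix with Rayleigh quotient between `lamLow` and `lamHigh`, one has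
`Σᵢ (Σⱼ |Aᵢⱼ|) vᵢ² ≤ √n · (lamHigh/lamLow) · (v ⬝ A v)`. -/
theorem weighted_sum_le_condition_number_quadratic_form
    (n : ℕ) (hn : 1 ≤ n) (A : Matrix (Fin n) (Fin n) ℝ) (hA : A.IsSymm)
    (lamLow lamHigh : ℝ) (h₀ : 0 < lamLow) (hle : lamLow ≤ lamHigh)
    (hlow : ∀ v : Fin n → ℝ,
      lamLow * ∑ i, (v i) ^ 2 ≤ ∑ i, ∑ j, v i * A i j * v j)
    (hup : ∀ v : Fin n → ℝ,
      (∑ i, ∑ j, v i * A i j * v j) ≤ lamHigh * ∑ i, (v i) ^ 2) :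
    ∀ v : Fin n → ℝ,
      (∑ i, (∑ j, |A i j|) * (v i) ^ 2) ≤
        Real.sqrt n * (lamHigh / lamLow) * ∑ i, ∑ j, v i * A i j * v j := by
  have hs : ∀ k l : Fin n, A k l = A l k := fun k l => hA.apply l k
  have hH : 0 < lamHigh := lt_of_lt_of_le h₀ hle
  -- diagonal bounds
  have hdiagup : ∀ i, A i i ≤ lamHigh := by
    intro i
    have h1 := hup (fun k => if k = i then 1 else 0)
    simpa [ite_mul, mul_ite, Finset.sum_ite_irrel, Finset.sum_ite_eq',
      Finset.sum_ite_eq] using h1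
  have hdiaglow : ∀ i, lamLow ≤ A i i := by
    intro i
    have h1 := hlow (fun k => if k = i then 1 else 0)
    simpa [ite_mul, mul_ite, Finset.sum_ite_irrel, Finset.sum_ite_eq',
      Finset.sum_ite_eq, sq] using h1
  -- quadratic form is nonneg
  have hpos : ∀ w : Fin n → ℝ, 0 ≤ ∑ i, ∑ j, w i * A i j * w j := by
    intro w
    exact le_trans (by positivity) (hlow w)
  -- row square-sum bound : ∑ j (A i j)^2 ≤ lamHigh * A i i
  have hrow : ∀ i, (∑ j, (A i j)^2) ≤ lamHigh * A i i := by
    intro i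
    set s := ∑ j, (A i j)^2 with hsdef
    set p := ∑ k, ∑ l, A i k * A k l * A i l with hpdef
    have hkey : ∀ t : ℝ, 0 ≤ A i i * t^2 + (2*s) * t + p := by
      intro t
      have hexp :
          (∑ k, ∑ l, (t * (if k = i then 1 else 0) + A i k) * A k l *
              (t * (if l = i then 1 else 0) + A i l))
          = t^2 * A i i + 2 * t * s + p := by
        simp only [add_mul, mul_add, Finset.sum_add_distrib, ite_mul, mul_ite, one_mul, zero_mul,
          mul_one, mul_zero, Finset.sum_ite_irrel, Finset.sum_const_zero,
          Finset.sum_ite_eq', Finset.mem_univ, if_true, Finset.mul_sum, Finset.sum_ite_eq]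
        ring_nf
        simp only [sq, hsdef, hpdef]
        rw [Finset.sum_congr rfl (fun x (_ : x ∈ Finset.univ) => by rw [hs x i] :
          ∀ x ∈ Finset.univ, t * A i x * A x i = t * A i x * A i x)]
        have h2 : (∑ x, t * A i x * A i x) = t * ∑ x, A i x * A i x := by
          rw [Finset.mul_sum]; exact Finset.sum_congr rfl fun x _ => by ring
        rw [h2]; ring_nf; rw [show (∑ x, t * A i x ^ 2) = t * ∑ x, A i x ^ 2 by rw [Finset.mul_sum]]; ring
      have := hpos (fun k => t * (if k = i then 1 else 0) + A i k)
      rw [hexp] at this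
      linarith
    have hdisc : discrim (A i i) (2*s) p ≤ 0 := discrim_le_zero fun x => by simpa [← pow_two] using hkey x
    have hdisc' : s^2 ≤ A i i * p := by
      unfold discrim at hdisc; nlinarith
    have hpup : p ≤ lamHigh * s := by
      have := hup (fun k => A i k)
      simpa [← hsdef, ← hpdef] using this
    have hs0 : 0 ≤ s := by positivity
    have hAii : 0 < A i i := lt_of_lt_of_le h₀ (hdiaglow i)
    rcases eq_or_lt_of_le hs0 with h | h
    · rw [← h]; positivity
    · nlinarith [mul_le_mul_of_nonneg_left hpup (le_of_lt hAii)]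
  -- row abs-sum bound
  have habs : ∀ i, (∑ j, |A i j|) ≤ Real.sqrt n * lamHigh := by
    intro i
    have h1 : (∑ j, |A i j|)^2 ≤ n * ∑ j, (A i j)^2 := by
      have := sq_sum_le_card_mul_sum_sq (s := Finset.univ) (f := fun j => |A i j|)
      simpa [sq_abs] using this
    have h2 : (∑ j, |A i j|)^2 ≤ (n : ℝ) * (lamHigh * lamHigh) := by
      calc (∑ j, |A i j|)^2 ≤ n * ∑ j, (A i j)^2 := h1
        _ ≤ (n : ℝ) * (lamHigh * lamHigh) := by
            have := le_trans (hrow i) (mul_le_mul_of_nonneg_left (hdiagup i) (le_of_lt hH))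
            exact mul_le_mul_of_nonneg_left this (by positivity)
    have h3 : (0:ℝ) ≤ ∑ j, |A i j| := by positivity
    have h4 : Real.sqrt ((n : ℝ) * (lamHigh * lamHigh)) = Real.sqrt n * lamHigh := by
      rw [Real.sqrt_mul (by positivity), Real.sqrt_mul_self (le_of_lt hH)]
    calc (∑ j, |A i j|) = Real.sqrt ((∑ j, |A i j|)^2) := by
          rw [Real.sqrt_sq h3]
      _ ≤ Real.sqrt ((n : ℝ) * (lamHigh * lamHigh)) := Real.sqrt_le_sqrt h2
      _ = Real.sqrt n * lamHigh := h4
  -- conclude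
  intro v
  have step1 : (∑ i, (∑ j, |A i j|) * (v i) ^ 2) ≤ Real.sqrt n * lamHigh * ∑ i, (v i)^2 := by
    rw [Finset.mul_sum]
    exact Finset.sum_le_sum fun i _ => mul_le_mul_of_nonneg_right (habs i) (sq_nonneg _)
  have step2 : Real.sqrt n * lamHigh * ∑ i, (v i)^2 ≤
      Real.sqrt n * (lamHigh / lamLow) * ∑ i, ∑ j, v i * A i j * v j := by
    have h1 := hlow v
    have hsn : 0 ≤ Real.sqrt n := Real.sqrt_nonneg _
    have : Real.sqrt n * lamHigh * ∑ i, (v i)^2 =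
        Real.sqrt n * (lamHigh / lamLow) * (lamLow * ∑ i, (v i)^2) := by
      field_simp
    rw [this]
    exact mul_le_mul_of_nonneg_left h1 (by positivity)
  linarith
end
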